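/- The sequence (e^{⌊N^{1/2}⌋} / (e^{⌊N^{1/2}⌋} + 2N))^{⌊e^{N^{1/2}} N^{−2}⌋} converges to 1 as N → +∞. -/

import Mathlib

open Real Filter

/-- `(e^{⌊√N⌋} / (e^{⌊√N⌋} + 2N))^{⌊e^{√N} N⁻²⌋} → 1` as `N → ∞`. -/
theorem tendsto_max_spike_bound :
    Tendsto (fun N : ℕ =>
        (Real.exp (⌊Real.sqrt N⌋₊ : ℝ) / (Real.exp (⌊Real.sqrt N⌋₊ : ℝ) + 2 * N)) ^
          ⌊Real.exp (Real.sqrt N) * (N : ℝ) ^ (-2 : ℤ)⌋₊)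
      atTop (nhds 1) := by
  have key : ∀ N : ℕ, 1 ≤ N →
      1 - 2 * Real.exp 1 / N ≤
        (Real.exp (⌊Real.sqrt N⌋₊ : ℝ) / (Real.exp (⌊Real.sqrt N⌋₊ : ℝ) + 2 * N)) ^
          ⌊Real.exp (Real.sqrt N) * (N : ℝ) ^ (-2 : ℤ)⌋₊ ∧
      (Real.exp (⌊Real.sqrt N⌋₊ : ℝ) / (Real.exp (⌊Real.sqrt N⌋₊ : ℝ) + 2 * N)) ^
          ⌊Real.exp (Real.sqrt N) * (N : ℝ) ^ (-2 : ℤ)⌋₊ ≤ 1 := by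
    intro N hN
    have hNpos : (0:ℝ) < N := by exact_mod_cast hN
    set s := Real.sqrt N with hs
    set m := (⌊s⌋₊ : ℝ) with hm
    set E := Real.exp m with hEdef
    set k := ⌊Real.exp s * (N : ℝ) ^ (-2 : ℤ)⌋₊ with hkdef
    have hEpos : 0 < E := Real.exp_pos m
    have hDpos : 0 < E + 2 * N := by positivity
    set x := 2 * (N:ℝ) / (E + 2 * N) with hxdef
    have hx0 : 0 ≤ x := by positivity
    have hx1 : x ≤ 1 := by
      rw [hxdef, div_le_one hDpos]; linarith
    have hbase : E / (E + 2 * N) = 1 - x := by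
      rw [hxdef]; field_simp; ring
    have hz : ((N:ℝ)) ^ (-2 : ℤ) = ((N:ℝ)^2)⁻¹ := by
      rw [zpow_neg]; norm_num [zpow_ofNat]
    have hk : (k:ℝ) ≤ Real.exp s * ((N:ℝ)^2)⁻¹ := by
      rw [← hz]; exact Nat.floor_le (by positivity)
    have hxE : x ≤ 2 * N / E := by
      rw [hxdef]; gcongr; linarith
    have hexp : Real.exp s ≤ Real.exp 1 * E := by
      rw [hEdef, ← Real.exp_add]
      refine Real.exp_le_exp.2 ?_
      have := Nat.lt_floor_add_one s
      rw [← hm] at this; linarith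
    have hkx : (k:ℝ) * x ≤ 2 * Real.exp 1 / N := by
      have c1 : (k:ℝ) * x ≤ (Real.exp s * ((N:ℝ)^2)⁻¹) * (2 * N / E) :=
        mul_le_mul hk hxE hx0 (by positivity)
      have c2 : (Real.exp s * ((N:ℝ)^2)⁻¹) * (2 * N / E)
          ≤ (Real.exp 1 * E * ((N:ℝ)^2)⁻¹) * (2 * N / E) := by gcongr
      have c3 : (Real.exp 1 * E * ((N:ℝ)^2)⁻¹) * (2 * N / E) = 2 * Real.exp 1 / N := by
        field_simp
      linarith
    constructor
    · rw [hbase]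
      have hbern : 1 - (k:ℝ) * x ≤ (1 - x) ^ k := by
        have h := one_add_mul_le_pow (a := -x) (by linarith) k
        rw [mul_neg, ← sub_eq_add_neg, ← sub_eq_add_neg] at h
        exact h
      linarith
    · rw [hbase]
      exact pow_le_one₀ (by linarith) (by linarith)
  have h0 : Tendsto (fun N : ℕ => 1 - 2 * Real.exp 1 / N) atTop (nhds 1) := by
    have h := tendsto_const_div_atTop_nhds_zero_nat (2 * Real.exp 1)
    have := tendsto_const_nhds (x := (1:ℝ)) (f := atTop (α := ℕ)) |>.sub h
    simpa using this
  refine tendsto_of_tendsto_of_tendsto_of_le_of_le' h0 tendsto_const_nhds ?_ ?_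
  · filter_upwards [eventually_ge_atTop 1] with N hN using (key N hN).1
  · filter_upwards [eventually_ge_atTop 1] with N hN using (key N hN).2
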